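/- arXiv:0912.4181 — 4 statements merged into one kernel-verified Lean document; each statement's English description precedes it below -/
import Mathlib

section
/- If c ∈ U' is a critical point of f (f′(c) = 0) which is periodic, i.e., f^j(c) ∈ U' for all 0 ≤ j < p and f^p(c) = c for some integer p ≥ 1, then c belongs to the topological interior of K_f. -/
open Set Metric Filter Topology

/-- The local degree `deg(f,z)`: the order of vanishing at `z` of `ζ ↦ f ζ - f z`,
i.e. the least `n ≥ 1` whose `n`-th derivative of `ζ ↦ f ζ - f z` at `z` is nonzero. -/
noncomputable def localDeg (f : ℂ → ℂ) (z : ℂ) : ℕ :=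
  sInf {n : ℕ | 0 < n ∧ iteratedDeriv n (fun w => f w - f z) z ≠ 0}

/-- `χ(z) = sup_{n ≥ 1} deg(fⁿ, z)`, valued in `ℕ∞`. -/
noncomputable def chiFn (f : ℂ → ℂ) (z : ℂ) : ℕ∞ :=
  ⨆ n : ℕ, (localDeg (f^[n + 1]) z : ℕ∞)

/-- The open unit disk `𝔻 ⊆ ℂ`. -/
def uDisk : Set ℂ := Metric.ball 0 1

/-- `V = (γ_1 ∘ g_{ε_1} ∘ γ_2 ∘ g_{ε_2} ∘ ⋯ ∘ γ_k ∘ g_{ε_k})(𝔻)`. -/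
noncomputable def Vset {d : ℕ} (g : Fin d → ℂ → ℂ) {k : ℕ}
    (gam : Fin k → ℂ → ℂ) (eps : Fin k → Fin d) : Set ℂ :=
  (List.ofFn (fun l => gam l ∘ g (eps l))).foldr (· ∘ ·) id '' uDisk

/-- `K_0 = U` and, for `k ≥ 1`, `K_k = {z ∈ U' : f^j(z) ∈ U' for 0 ≤ j ≤ k-1}`,
the `k`-th preimage `f^{-k}(U)`. -/
def Kiter (U U' : Set ℂ) (f : ℂ → ℂ) : ℕ → Set ℂ
  | 0 => U
  | k + 1 => {z ∈ U' | ∀ j ≤ k, f^[j] z ∈ U'}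

theorem stmt_1
    (N : ℕ) (hN : 1 ≤ N)
    (U : Set ℂ) (hUopen : IsOpen U) (hUne : U.Nonempty)
    (hUdisk : ∃ h : ℂ → ℂ, DifferentiableOn ℂ h uDisk ∧ Set.BijOn h uDisk U)
    (Ui : Fin N → Set ℂ)
    (hUiopen : ∀ i, IsOpen (Ui i)) (hUine : ∀ i, (Ui i).Nonempty)
    (hUidisk : ∀ i, ∃ h : ℂ → ℂ, DifferentiableOn ℂ h uDisk ∧ Set.BijOn h uDisk (Ui i))
    (hUidisj : ∀ i j, i ≠ j → Disjoint (Ui i) (Ui j))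
    (hUicl : ∀ i, closure (Ui i) ⊆ U)
    (U' : Set ℂ) (hU' : U' = ⋃ i, Ui i)
    (f : ℂ → ℂ)
    (hf : ∃ Ω : Set ℂ, IsOpen Ω ∧ closure U' ⊆ Ω ∧ DifferentiableOn ℂ f Ω)
    (dI : Fin N → ℕ) (hdI : ∀ i, 1 ≤ dI i)
    (hfmaps : ∀ i, Set.MapsTo f (Ui i) U)
    (hfdeg : ∀ i, ∀ w ∈ U, (∑ᶠ z ∈ {z ∈ Ui i | f z = w}, localDeg f z) = dI i)
    (d : ℕ) (hdsum : d = ∑ i, dI i) (hd2 : 2 ≤ d)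
    (Kf Jf : Set ℂ)
    (hKf : Kf = {z ∈ U' | ∀ n : ℕ, f^[n] z ∈ U'})
    (hJf : Jf = frontier Kf)
    :
    ∀ c ∈ U', deriv f c = 0 →
      ∀ p : ℕ, 1 ≤ p → (∀ j < p, f^[j] c ∈ U') → f^[p] c = c →
        c ∈ interior Kf := by
  intro c hc hc0 p hp horb hper
  obtain ⟨Om, hOmopen, hclOm, hdiff⟩ := hf
  have hU'open : IsOpen U' := hU' ▸ isOpen_iUnion hUiopen
  have hsubOm : U' ⊆ Om := fun z hz => hclOm (subset_closure hz)
  -- all orbit points are in U'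
  have horbit : ∀ n : ℕ, f^[n] c ∈ U' := by
    have hq : ∀ q : ℕ, f^[p * q] c = c := by
      intro q
      induction q with
      | zero => simp
      | succ q ih =>
        have : p * (q + 1) = p * q + p := by ring
        rw [this, Function.iterate_add_apply, hper, ih]
    intro n
    have h1 : n = n % p + p * (n / p) := by
      rw [Nat.mod_add_div]
    rw [h1, Function.iterate_add_apply, hq]
    exact horb _ (Nat.mod_lt _ hp)
  have hdAt : ∀ z ∈ U', DifferentiableAt ℂ f z := fun z hz =>
    hdiff.differentiableAt (hOmopen.mem_nhds (hsubOm hz))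
  -- differentiability of iterates along the orbit
  have hiterdiff : ∀ m n : ℕ, DifferentiableAt ℂ (f^[m]) (f^[n] c) := by
    intro m
    induction m with
    | zero => intro n; simpa using differentiableAt_id'
    | succ m ih =>
      intro n
      have h1 : DifferentiableAt ℂ f (f^[n] c) := hdAt _ (horbit n)
      have h2 : DifferentiableAt ℂ (f^[m]) (f^[n + 1] c) := ih (n + 1)
      have h2' : DifferentiableAt ℂ (f^[m]) (f (f^[n] c)) := by
        rwa [Function.iterate_succ_apply'] at h2
      rw [Function.iterate_succ]
      exact h2'.comp _ h1
  -- deriv of f^[p] at c is 0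
  obtain ⟨m, rfl⟩ : ∃ m, p = m + 1 := ⟨p - 1, (Nat.succ_pred_eq_of_pos hp).symm⟩
  have hfc : f c = f^[1] c := by simp
  have hD : HasDerivAt (f^[m + 1]) 0 c := by
    have h1 : HasDerivAt f 0 c := by
      have := (hdAt c hc).hasDerivAt
      rwa [hc0] at this
    have h2 : HasDerivAt (f^[m]) (deriv (f^[m]) (f c)) (f c) := by
      rw [hfc]; exact (hiterdiff m 1).hasDerivAt
    have h3 := h2.comp c h1
    rw [mul_zero] at h3
    rw [Function.iterate_succ]
    exact h3
  -- contraction estimate eventually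
  have hlo : (fun z => f^[m + 1] z - f^[m + 1] c - (z - c) • (0 : ℂ)) =o[𝓝 c]
      (fun z => z - c) := hasDerivAt_iff_isLittleO.1 hD
  have hev1 : ∀ᶠ z in 𝓝 c, ‖f^[m + 1] z - c‖ ≤ 1 / 2 * ‖z - c‖ := by
    have := hlo.def (by norm_num : (0 : ℝ) < 1 / 2)
    filter_upwards [this] with z hz
    simpa [hper, smul_zero] using hz
  have hev2 : ∀ᶠ z in 𝓝 c, ∀ j < m + 1, f^[j] z ∈ U' := by
    rw [show (fun z => ∀ j < m + 1, f^[j] z ∈ U') =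
        (fun z => ∀ j ∈ Finset.range (m + 1), f^[j] z ∈ U') by
      ext z; simp]
    rw [Filter.eventually_all_finset]
    intro j hj
    have hcont : ContinuousAt (f^[j]) c := by
      have := hiterdiff j 0
      simpa using this.continuousAt
    exact hcont.eventually_mem (hU'open.mem_nhds (horbit j))
  obtain ⟨r, hr0, hball⟩ := Metric.eventually_nhds_iff_ball.1 (hev1.and hev2)
  -- the ball is contained in Kf
  have hsub : Metric.ball c r ⊆ Kf := by
    intro z hz
    have hcyc : ∀ q : ℕ, f^[(m + 1) * q] z ∈ Metric.ball c r := by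
      intro q
      induction q with
      | zero => simpa using hz
      | succ q ih =>
        have heq : (m + 1) * (q + 1) = (m + 1) + (m + 1) * q := by ring
        rw [heq, Function.iterate_add_apply]
        have h1 := (hball _ ih).1
        have h2 : dist (f^[(m + 1) * q] z) c < r := ih
        rw [dist_eq_norm] at h2
        rw [Metric.mem_ball, dist_eq_norm]
        calc ‖f^[m + 1] (f^[(m + 1) * q] z) - c‖
            ≤ 1 / 2 * ‖f^[(m + 1) * q] z - c‖ := h1
          _ ≤ ‖f^[(m + 1) * q] z - c‖ := by nlinarith [norm_nonneg (f^[(m + 1) * q] z - c)]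
          _ < r := h2
    have hall : ∀ n : ℕ, f^[n] z ∈ U' := by
      intro n
      have h1 : n = n % (m + 1) + (m + 1) * (n / (m + 1)) := by
        rw [Nat.mod_add_div]
      rw [h1, Function.iterate_add_apply]
      exact (hball _ (hcyc (n / (m + 1)))).2 _ (Nat.mod_lt _ hp)
    rw [hKf]
    have hz0 : z ∈ U' := by simpa using hall 0
    exact ⟨hz0, hall⟩
  exact interior_mono hsub (by rw [Metric.isOpen_ball.interior_eq]; exact Metric.mem_ball_self hr0)
end

section
/- No critical point of f is periodic: there is no c ∈ U' with f′(c) = 0, f^j(c) ∈ U' for all 0 ≤ j < p, and f^p(c) = c for some integer p ≥ 1. -/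
open Set Metric Filter Topology

lemma iter_diffAt {Ω : Set ℂ} {f : ℂ → ℂ} (hΩ : IsOpen Ω)
    (hf : DifferentiableOn ℂ f Ω) :
    ∀ (k : ℕ) (x : ℂ), (∀ j < k, f^[j] x ∈ Ω) → DifferentiableAt ℂ (f^[k]) x := by
  intro k
  induction k with
  | zero => intro x _; simpa using differentiableAt_id'
  | succ k ih =>
    intro x hx
    rw [Function.iterate_succ']
    exact ((hf.differentiableAt (hΩ.mem_nhds (hx k (Nat.lt_succ_self k)))).comp x
      (ih x fun j hj => hx j (hj.trans (Nat.lt_succ_self k))))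

theorem stmt_4
    (N : ℕ) (hN : 1 ≤ N)
    (U : Set ℂ) (hUopen : IsOpen U) (hUne : U.Nonempty)
    (hUdisk : ∃ h : ℂ → ℂ, DifferentiableOn ℂ h uDisk ∧ Set.BijOn h uDisk U)
    (Ui : Fin N → Set ℂ)
    (hUiopen : ∀ i, IsOpen (Ui i)) (hUine : ∀ i, (Ui i).Nonempty)
    (hUidisk : ∀ i, ∃ h : ℂ → ℂ, DifferentiableOn ℂ h uDisk ∧ Set.BijOn h uDisk (Ui i))
    (hUidisj : ∀ i j, i ≠ j → Disjoint (Ui i) (Ui j))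
    (hUicl : ∀ i, closure (Ui i) ⊆ U)
    (U' : Set ℂ) (hU' : U' = ⋃ i, Ui i)
    (f : ℂ → ℂ)
    (hf : ∃ Ω : Set ℂ, IsOpen Ω ∧ closure U' ⊆ Ω ∧ DifferentiableOn ℂ f Ω)
    (dI : Fin N → ℕ) (hdI : ∀ i, 1 ≤ dI i)
    (hfmaps : ∀ i, Set.MapsTo f (Ui i) U)
    (hfdeg : ∀ i, ∀ w ∈ U, (∑ᶠ z ∈ {z ∈ Ui i | f z = w}, localDeg f z) = dI i)
    (d : ℕ) (hdsum : d = ∑ i, dI i) (hd2 : 2 ≤ d)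
    (Kf Jf : Set ℂ)
    (hKf : Kf = {z ∈ U' | ∀ n : ℕ, f^[n] z ∈ U'})
    (hJf : Jf = frontier Kf)
    (hKJ : Kf = Jf) (hKne : Kf.Nonempty) (hKcomp : IsCompact Kf)
    (hKtd : IsTotallyDisconnected Kf)
    (hKperf : ∀ x ∈ Kf, x ∈ closure (Kf \ {x}))
    (hcritK : ∀ z ∈ U', deriv f z = 0 → z ∈ Kf)
    :
    ¬ ∃ c ∈ U', deriv f c = 0 ∧
      ∃ p : ℕ, 1 ≤ p ∧ (∀ j < p, f^[j] c ∈ U') ∧ f^[p] c = c := by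
  rintro ⟨c, hc, hdc, p, hp, horb, hper⟩
  obtain ⟨Ω, hΩo, hΩcl, hΩf⟩ := hf
  have hU'Ω : U' ⊆ Ω := subset_closure.trans hΩcl
  -- orbit points are in Ω
  have horbΩ : ∀ j < p, f^[j] c ∈ Ω := fun j hj => hU'Ω (horb j hj)
  -- derivative of f^[p] at c is 0
  have hfc : HasDerivAt f 0 c := by
    have := (hΩf.differentiableAt (hΩo.mem_nhds (hU'Ω hc))).hasDerivAt
    rwa [hdc] at this
  have hdiffp1 : DifferentiableAt ℂ (f^[p - 1]) (f c) := by
    apply iter_diffAt hΩo hΩf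
    intro j hj
    have : f^[j] (f c) = f^[j + 1] c := by
      rw [Function.iterate_succ_apply]
    rw [this]
    exact horbΩ (j + 1) (by omega)
  have hh : HasDerivAt (f^[p]) 0 c := by
    have hcomp := (hdiffp1.hasDerivAt.comp c hfc)
    rw [mul_zero] at hcomp
    have : f^[p - 1] ∘ f = f^[p] := by
      rw [← Function.iterate_succ, Nat.sub_one, Nat.succ_pred_eq_of_pos hp]
    rwa [this] at hcomp
  set h : ℂ → ℂ := f^[p] with hhdef
  -- contraction eventually
  have hlt : ∀ᶠ z in 𝓝 c, ‖h z - c‖ ≤ (1/2 : ℝ) * ‖z - c‖ := by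
    have := (hasDerivAt_iff_isLittleO.mp hh).def (by norm_num : (0:ℝ) < 1/2)
    filter_upwards [this] with z hz
    simpa [hper, smul_zero] using hz
  -- eventually the whole partial orbit stays in U'
  have horbnb : ∀ᶠ z in 𝓝 c, ∀ j < p, f^[j] z ∈ U' := by
    rw [show (fun z => ∀ j < p, f^[j] z ∈ U') = fun z => ∀ j ∈ Set.Iio p, f^[j] z ∈ U'
      from rfl, eventually_all_finite (Set.finite_Iio p)]
    intro j hj
    have hcont : ContinuousAt (f^[j]) c :=
      (iter_diffAt hΩo hΩf j c (fun i hi => horbΩ i (hi.trans hj))).continuousAt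
    have hUo : IsOpen U' := by
      rw [hU']; exact isOpen_iUnion hUiopen
    exact hcont.eventually_mem (hUo.mem_nhds (horb j hj))
  obtain ⟨δ, hδpos, hδ⟩ := Metric.eventually_nhds_iff_ball.mp (hlt.and horbnb)
  -- h maps ball c δ into itself
  have hmaps : ∀ z ∈ Metric.ball c δ, ∀ q : ℕ, h^[q] z ∈ Metric.ball c δ := by
    intro z hz q
    induction q with
    | zero => simpa using hz
    | succ q ih =>
      rw [Function.iterate_succ_apply']
      have := (hδ _ ih).1
      have hd : dist (h^[q] z) c < δ := Metric.mem_ball.mp ih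
      rw [Metric.mem_ball, dist_eq_norm]
      rw [dist_eq_norm] at hd
      nlinarith [norm_nonneg (h^[q] z - c)]
  -- ball ⊆ Kf
  have hball : Metric.ball c δ ⊆ Kf := by
    intro z hz
    rw [hKf]
    have hall : ∀ n : ℕ, f^[n] z ∈ U' := by
      intro n
      have hrep : n % p + p * (n / p) = n := Nat.mod_add_div n p
      have : f^[n] z = f^[n % p] (h^[n / p] z) := by
        conv_lhs => rw [← hrep]
        rw [Function.iterate_add_apply, hhdef, ← Function.iterate_mul]
      rw [this]
      exact (hδ _ (hmaps z hz (n / p))).2 (n % p) (Nat.mod_lt n hp)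
    exact ⟨by simpa using hall 0, hall⟩
  -- contradiction: c is interior to Kf but Kf = frontier Kf
  have hcint : c ∈ interior Kf :=
    interior_mono hball (by rw [Metric.isOpen_ball.interior_eq]; exact Metric.mem_ball_self hδpos)
  have hcK : c ∈ Kf := hball (Metric.mem_ball_self hδpos)
  rw [hKJ, hJf] at hcK
  exact hcK.2 hcint
end

section
/- The map π : Σ_d → J_f is surjective. -/
open Set Metric Filter Topology

set_option maxHeartbeats 2000000 in
theorem stmt_13
    (N : ℕ) (hN : 1 ≤ N)
    (U : Set ℂ) (hUopen : IsOpen U) (hUne : U.Nonempty)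
    (hUdisk : ∃ h : ℂ → ℂ, DifferentiableOn ℂ h uDisk ∧ Set.BijOn h uDisk U)
    (Ui : Fin N → Set ℂ)
    (hUiopen : ∀ i, IsOpen (Ui i)) (hUine : ∀ i, (Ui i).Nonempty)
    (hUidisk : ∀ i, ∃ h : ℂ → ℂ, DifferentiableOn ℂ h uDisk ∧ Set.BijOn h uDisk (Ui i))
    (hUidisj : ∀ i j, i ≠ j → Disjoint (Ui i) (Ui j))
    (hUicl : ∀ i, closure (Ui i) ⊆ U)
    (U' : Set ℂ) (hU' : U' = ⋃ i, Ui i)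
    (f : ℂ → ℂ)
    (hf : ∃ Ω : Set ℂ, IsOpen Ω ∧ closure U' ⊆ Ω ∧ DifferentiableOn ℂ f Ω)
    (dI : Fin N → ℕ) (hdI : ∀ i, 1 ≤ dI i)
    (hfmaps : ∀ i, Set.MapsTo f (Ui i) U)
    (hfdeg : ∀ i, ∀ w ∈ U, (∑ᶠ z ∈ {z ∈ Ui i | f z = w}, localDeg f z) = dI i)
    (d : ℕ) (hdsum : d = ∑ i, dI i) (hd2 : 2 ≤ d)
    (Kf Jf : Set ℂ)
    (hKf : Kf = {z ∈ U' | ∀ n : ℕ, f^[n] z ∈ U'})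
    (hJf : Jf = frontier Kf)
    (hKJ : Kf = Jf) (hKne : Kf.Nonempty) (hKcomp : IsCompact Kf)
    (hKtd : IsTotallyDisconnected Kf)
    (hKperf : ∀ x ∈ Kf, x ∈ closure (Kf \ {x}))
    (hcritK : ∀ z ∈ U', deriv f z = 0 → z ∈ Kf)
    (w : ℂ) (hw : w ∈ U \ U')
    (phi : ℂ → ℂ) (hphi0 : phi 0 = w)
    (hphidiff : DifferentiableOn ℂ phi uDisk)
    (hphimaps : Set.MapsTo phi uDisk (U \ Jf))
    (hphisurj : phi '' uDisk = U \ Jf)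
    (hphicov : IsCoveringMap (Set.MapsTo.restrict phi uDisk (U \ Jf) hphimaps))
    (Gam : Set (ℂ → ℂ))
    (hGam : Gam = {γ : ℂ → ℂ | Set.BijOn γ uDisk uDisk ∧ DifferentiableOn ℂ γ uDisk ∧
      ∀ z ∈ uDisk, phi (γ z) = phi z})
    (g : Fin d → ℂ → ℂ)
    (hgmaps : ∀ j, Set.MapsTo (g j) uDisk uDisk)
    (hgdiff : ∀ j, DifferentiableOn ℂ (g j) uDisk)
    (hglift : ∀ j, ∀ z ∈ uDisk, f (phi (g j z)) = phi z)
    (hgdist : ∀ j j' : Fin d, j ≠ j' → ∀ z ∈ uDisk, phi (g j z) ≠ phi (g j' z))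
    (hgmerge : ∀ j j' : Fin d, phi '' (g j '' uDisk) = phi '' (g j' '' uDisk) →
      g j '' uDisk = g j' '' uDisk)
    (Gfam : (k : ℕ) → (Fin k → Fin d) → Fin k → ℂ → ℂ)
    (hGfamMem : ∀ (k : ℕ) (eps : Fin k → Fin d) (l : Fin k), Gfam k eps l ∈ Gam)
    (hnest : ∀ k : ℕ, 1 ≤ k → ∀ eps : Fin (k + 1) → Fin d,
      Vset g (Gfam (k + 1) eps) eps ⊆
        Vset g (Gfam k (fun l => eps l.castSucc)) (fun l => eps l.castSucc))
    (hshiftinv : ∀ (k : ℕ) (eps : Fin (k + 1) → Fin d) (l : Fin k),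
      Gfam (k + 1) eps l.succ = Gfam k (fun m => eps m.succ) l)
    (hmerge : ∀ (k : ℕ) (eps eps' : Fin k → Fin d),
      phi '' Vset g (Gfam k eps) eps = phi '' Vset g (Gfam k eps') eps' →
        Vset g (Gfam k eps) eps = Vset g (Gfam k eps') eps')
    (pi : (ℕ → Fin d) → ℂ)
    (hpiJ : ∀ eps, pi eps ∈ Jf)
    (hpidef : ∀ eps : ℕ → Fin d,
      (⋂ k : ℕ, closure (phi '' Vset g (Gfam (k + 1) (fun l : Fin (k + 1) => eps l))
        (fun l : Fin (k + 1) => eps l))) = {pi eps})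
    (hpicont : Continuous pi)
    (hpiconj : ∀ eps : ℕ → Fin d, pi (fun n => eps (n + 1)) = f (pi eps))
    :
    ∀ z ∈ Jf, ∃ eps : ℕ → Fin d, pi eps = z := by
    classical
  obtain ⟨Om, hOmo, hOmcl, hfOm⟩ := hf
  -- basic facts
  have hU'open : IsOpen U' := hU' ▸ isOpen_iUnion hUiopen
  have hUiU' : ∀ i, Ui i ⊆ U' := fun i => hU' ▸ Set.subset_iUnion Ui i
  have hU'U : U' ⊆ U := by
    rw [hU']; exact Set.iUnion_subset fun i => subset_closure.trans (hUicl i)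
  have hU'Om : U' ⊆ Om := subset_closure.trans hOmcl
  have hcont : ContinuousOn f U' := hfOm.continuousOn.mono hU'Om
  have hKfU' : Kf ⊆ U' := by rw [hKf]; exact fun z hz => hz.1
  have hKfwd : ∀ x ∈ Kf, f x ∈ Kf := by
    intro x hx; rw [hKf] at hx ⊢
    refine ⟨by simpa using hx.2 1, fun n => ?_⟩
    have := hx.2 (n + 1); rwa [Function.iterate_succ_apply] at this
  have hKback : ∀ x, x ∈ U' → f x ∈ Kf → x ∈ Kf := by
    intro x hxU hfx; rw [hKf] at hfx ⊢
    refine ⟨hxU, fun n => ?_⟩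
    cases n with
    | zero => simpa using hxU
    | succ n => rw [Function.iterate_succ_apply]; exact hfx.2 n
  have hKcl : IsClosed Kf := hKcomp.isClosed
  have hanalytic : ∀ x ∈ closure U', AnalyticAt ℂ f x := fun x hx =>
    hfOm.analyticAt (hOmo.mem_nhds (hOmcl hx))
  -- no critical point over a point outside Kf
  have hncrit : ∀ (p : ℂ), p ∉ Kf → ∀ z, z ∈ U' → f z = p → deriv f z ≠ 0 := by
    intro p hpK z hz hfz hd0
    exact hpK (hfz ▸ hKfwd z (hcritK z hz hd0))
  -- fibers over points of U \ Kf are finite of cardinality dI i in each Ui i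
  have hfib : ∀ (p : ℂ), p ∈ U → p ∉ Kf → ∀ i, ∃ t : Finset ℂ,
      (↑t : Set ℂ) = {z ∈ Ui i | f z = p} ∧ t.card = dI i := by
    intro p hpU hpK i
    set s : Set ℂ := {z ∈ Ui i | f z = p} with hs
    have hdeg1 : ∀ z ∈ s, localDeg f z = 1 := by
      intro z hz
      have hzU' : z ∈ U' := hUiU' i hz.1
      have hder : deriv f z ≠ 0 := hncrit p hpK z hzU' hz.2
      have h1 : (1 : ℕ) ∈ {n : ℕ | 0 < n ∧ iteratedDeriv n (fun w => f w - f z) z ≠ 0} := by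
        refine ⟨one_pos, ?_⟩
        rw [iteratedDeriv_one, deriv_sub_const]
        exact hder
      exact le_antisymm (Nat.sInf_le h1) (Nat.sInf_mem (⟨1, h1⟩ : Set.Nonempty _)).1
    have hsum : (∑ᶠ z ∈ s, localDeg f z) = dI i := hfdeg i p hpU
    have hsum1 : (∑ᶠ z ∈ s, (1 : ℕ)) = dI i := by
      rw [← hsum]
      exact finsum_mem_congr rfl fun z hz => (hdeg1 z hz).symm
    have hfin : s.Finite := by
      by_contra hinf
      have hki : (s ∩ Function.support fun _ : ℂ => (1 : ℕ)).Infinite := by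
        rw [Function.support_const one_ne_zero, Set.inter_univ]
        exact hinf
      rw [finsum_mem_eq_zero_of_infinite hki] at hsum1
      have := hdI i; omega
    refine ⟨hfin.toFinset, hfin.coe_toFinset, ?_⟩
    rw [finsum_mem_eq_finite_toFinset_sum _ hfin, Finset.sum_const, smul_eq_mul, mul_one] at hsum1
    exact hsum1
  -- no boundary point of a piece maps into U \ Kf
  have hfront : ∀ i (b : ℂ), b ∈ frontier (Ui i) → f b ∈ U → f b ∉ Kf → False := by
    intro i b hbf hfbU hfbK
    have hbcl : b ∈ closure (Ui i) := frontier_subset_closure hbf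
    have hbnotin : b ∉ Ui i := by
      rw [(hUiopen i).frontier_eq] at hbf; exact hbf.2
    obtain ⟨t, hts, htc⟩ := hfib (f b) hfbU hfbK i
    have htmem : ∀ x : ℂ, x ∈ t ↔ (x ∈ Ui i ∧ f x = f b) := by
      intro x
      rw [← Finset.mem_coe, hts]
      exact Iff.rfl
    have hbt : b ∉ t := fun h => hbnotin ((htmem b).1 h).1
    obtain ⟨z0, hz0⟩ : t.Nonempty := Finset.card_pos.1 (by rw [htc]; exact hdI i)
    -- minimal pairwise distance of the configuration
    set S : Finset ℂ := insert b t with hSdef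
    have hbz0 : b ≠ z0 := fun h => hbt (h ▸ hz0)
    have hSne : S.offDiag.Nonempty :=
      ⟨(b, z0), Finset.mem_offDiag.2 ⟨Finset.mem_insert_self _ _,
        Finset.mem_insert_of_mem hz0, hbz0⟩⟩
    set del : ℝ := S.offDiag.inf' hSne (fun p => dist p.1 p.2) with hdel
    have hdelpos : 0 < del := by
      obtain ⟨p, hp, hpe⟩ := S.offDiag.exists_mem_eq_inf' hSne (fun p => dist p.1 p.2)
      rw [hdel, hpe]
      exact dist_pos.2 (Finset.mem_offDiag.1 hp).2.2
    have hdelle : ∀ x ∈ S, ∀ y ∈ S, x ≠ y → del ≤ dist x y := by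
      intro x hx y hy hne
      have hmem : (x, y) ∈ S.offDiag := Finset.mem_offDiag.2 ⟨hx, hy, hne⟩
      have h5 := Finset.inf'_le (fun p : ℂ × ℂ => dist p.1 p.2) hmem
      rw [hdel]
      exact h5
    -- radii around the fiber points
    have hrho : ∀ z ∈ t, ∃ r : ℝ, 0 < r ∧ r ≤ del / 3 ∧ Metric.ball z r ⊆ Ui i := by
      intro z hz
      obtain ⟨r0, hr0, hball⟩ := Metric.isOpen_iff.1 (hUiopen i) z ((htmem z).1 hz).1
      exact ⟨min r0 (del / 3), lt_min hr0 (by positivity), min_le_right _ _,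
        (Metric.ball_subset_ball (min_le_left _ _)).trans hball⟩
    choose! rho hrhopos hrhole hrhoball using hrho
    -- local surjectivity near the fiber points
    have hmapnhds : ∀ z ∈ t, 𝓝 (f b) ≤ Filter.map f (𝓝 z) := by
      intro z hz
      have hzUi := ((htmem z).1 hz).1
      have hzfz := ((htmem z).1 hz).2
      have han : AnalyticAt ℂ f z := hanalytic z (subset_closure (hUiU' i hzUi))
      rcases han.eventually_constant_or_nhds_le_map_nhds with hconst | hle
      · exfalso
        have hder0 : deriv f z = 0 := by
          have := Filter.EventuallyEq.deriv_eq (f₁ := f) (f := fun _ => f z) hconst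
          rwa [deriv_const] at this
        exact hncrit (f b) hfbK z (hUiU' i hzUi) hzfz hder0
      · rwa [hzfz] at hle
    set W : Set ℂ := (⋂ z ∈ (t : Set ℂ), f '' Metric.ball z (rho z)) ∩ (U ∩ Kfᶜ) with hWdef
    have hW : W ∈ 𝓝 (f b) := by
      refine Filter.inter_mem ?_ (Filter.inter_mem (hUopen.mem_nhds hfbU)
        (hKcl.isOpen_compl.mem_nhds hfbK))
      refine (Filter.biInter_mem t.finite_toSet).2 ?_
      intro z hz
      have hz' : z ∈ t := hz
      exact hmapnhds z hz' (Filter.image_mem_map (Metric.ball_mem_nhds z (hrhopos z hz')))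
    have hcontb : ContinuousAt f b :=
      (hfOm.differentiableAt (hOmo.mem_nhds (hOmcl (closure_mono (hUiU' i) hbcl)))).continuousAt
    have hnb : (f ⁻¹' W ∩ Metric.ball b (del / 3)) ∈ 𝓝 b :=
      Filter.inter_mem (hcontb.preimage_mem_nhds hW) (Metric.ball_mem_nhds b (by positivity))
    obtain ⟨b', hb'⟩ := (mem_closure_iff_nhds.1 hbcl) _ hnb
    obtain ⟨⟨hb'W, hb'ball⟩, hb'Ui⟩ := hb'
    have hw1U : f b' ∈ U := hb'W.2.1
    have hw1K : f b' ∉ Kf := hb'W.2.2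
    have hxex : ∀ z ∈ t, ∃ x, x ∈ Metric.ball z (rho z) ∧ f x = f b' := by
      intro z hz
      have hmem := Set.mem_iInter₂.1 hb'W.1 z (Finset.mem_coe.2 hz)
      obtain ⟨x, hx, hfx⟩ := hmem
      exact ⟨x, hx, hfx⟩
    choose! xx hxball hxf using hxex
    obtain ⟨t1, ht1s, ht1c⟩ := hfib (f b') hw1U hw1K i
    have ht1mem : ∀ y : ℂ, y ∈ t1 ↔ (y ∈ Ui i ∧ f y = f b') := by
      intro y
      rw [← Finset.mem_coe, ht1s]
      exact Iff.rfl
    have hxinj : Set.InjOn xx t := by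
      intro z hz z' hz' hxx
      by_contra hne
      have h1 : del ≤ dist z z' := hdelle z (Finset.mem_insert_of_mem hz) z'
        (Finset.mem_insert_of_mem hz') hne
      have h2 : dist (xx z) z < del / 3 :=
        lt_of_lt_of_le (Metric.mem_ball.1 (hxball z hz)) (hrhole z hz)
      have h3 : dist (xx z') z' < del / 3 :=
        lt_of_lt_of_le (Metric.mem_ball.1 (hxball z' hz')) (hrhole z' hz')
      have h4 : dist z z' ≤ dist z (xx z) + dist (xx z') z' := by
        calc dist z z' ≤ dist z (xx z) + dist (xx z) z' := dist_triangle _ _ _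
        _ = dist z (xx z) + dist (xx z') z' := by rw [hxx]
      rw [dist_comm z (xx z)] at h4
      linarith
    have hb'x : ∀ z ∈ t, xx z ≠ b' := by
      intro z hz hEq
      have h1 : del ≤ dist b z := hdelle b (Finset.mem_insert_self _ _) z
        (Finset.mem_insert_of_mem hz) (fun h => hbt (h ▸ hz))
      have h2 : dist (xx z) z < del / 3 :=
        lt_of_lt_of_le (Metric.mem_ball.1 (hxball z hz)) (hrhole z hz)
      have h3 : dist b' b < del / 3 := Metric.mem_ball.1 hb'ball
      have h4 : dist b z ≤ dist b (xx z) + dist (xx z) z := dist_triangle _ _ _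
      have h5 : dist b (xx z) < del / 3 := by rw [hEq, dist_comm]; exact h3
      linarith
    have hsub : insert b' (t.image xx) ⊆ t1 := by
      intro y hy
      rcases Finset.mem_insert.1 hy with rfl | hy
      · exact (ht1mem y).2 ⟨hb'Ui, rfl⟩
      · obtain ⟨z, hz, rfl⟩ := Finset.mem_image.1 hy
        exact (ht1mem _).2 ⟨hrhoball z hz (hxball z hz), hxf z hz⟩
    have hcard1 : (insert b' (t.image xx)).card = dI i + 1 := by
      rw [Finset.card_insert_of_notMem, Finset.card_image_of_injOn hxinj, htc]
      intro h
      obtain ⟨z, hz, hEq⟩ := Finset.mem_image.1 h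
      exact hb'x z hz hEq
    have hle := Finset.card_le_card hsub
    rw [hcard1, ht1c] at hle
    omega
  -- basic facts about Gfam
  have hGamMapsTo : ∀ (k : ℕ) (eps : Fin k → Fin d) (l : Fin k),
      Set.MapsTo (Gfam k eps l) uDisk uDisk := by
    intro k eps l
    have hmem := hGfamMem k eps l
    rw [hGam] at hmem
    exact hmem.1.mapsTo
  have hGamPhi : ∀ (k : ℕ) (eps : Fin k → Fin d) (l : Fin k), ∀ x ∈ uDisk,
      phi (Gfam k eps l x) = phi x := by
    intro k eps l
    have hmem := hGfamMem k eps l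
    rw [hGam] at hmem
    exact hmem.2.2
  -- structural lemmas about Vset
  have hVzero : ∀ (gam : Fin 0 → ℂ → ℂ) (w' : Fin 0 → Fin d), Vset g gam w' = uDisk := by
    intro gam w'
    unfold Vset
    rw [List.ofFn_zero, List.foldr_nil, Set.image_id]
  have hVsucc : ∀ (k : ℕ) (gam : Fin (k + 1) → ℂ → ℂ) (w' : Fin (k + 1) → Fin d),
      Vset g gam w' = (gam 0 ∘ g (w' 0)) ''
        Vset g (fun l => gam l.succ) (fun l => w' l.succ) := by
    intro k gam w'
    unfold Vset
    rw [List.ofFn_succ, List.foldr_cons, Set.image_comp]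
  have hVsub : ∀ (k : ℕ) (gam : Fin k → ℂ → ℂ),
      (∀ l, Set.MapsTo (gam l) uDisk uDisk) → ∀ w', Vset g gam w' ⊆ uDisk := by
    intro k
    induction k with
    | zero =>
      intro gam _ w'
      rw [hVzero]
    | succ k ih =>
      intro gam hgam w'
      rw [hVsucc]
      have hin := ih (fun l => gam l.succ) (fun l => hgam l.succ) (fun l => w' l.succ)
      rintro y ⟨x, hx, rfl⟩
      exact hgam 0 (hgmaps (w' 0) (hin hx))
  have hphiGam : ∀ (k : ℕ) (eps : Fin k → Fin d) (l : Fin k) (X : Set ℂ), X ⊆ uDisk →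
      phi '' (Gfam k eps l '' X) = phi '' X := by
    intro k eps l X hX
    rw [← Set.image_comp]
    exact Set.image_congr fun x hx => hGamPhi k eps l x (hX hx)
  have hVone : ∀ (w' : Fin 1 → Fin d),
      phi '' Vset g (Gfam 1 w') w' = phi '' (g (w' 0) '' uDisk) := by
    intro w'
    rw [hVsucc 0 (Gfam 1 w') w', hVzero, Set.image_comp (Gfam 1 w' 0) (g (w' 0))]
    exact hphiGam 1 w' 0 _ (hgmaps (w' 0)).image_subset
  have hVcons : ∀ (k : ℕ) (w' : Fin k → Fin d) (j : Fin d),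
      phi '' Vset g (Gfam (k + 1) (Fin.cons j w')) (Fin.cons j w')
        = phi '' (g j '' Vset g (Gfam k w') w') := by
    intro k w' j
    have h1 : (fun m : Fin k => (Fin.cons j w' : Fin (k + 1) → Fin d) m.succ) = w' := by
      funext m
      simp
    have h2 : (fun l : Fin k => Gfam (k + 1) (Fin.cons j w') l.succ) = Gfam k w' := by
      funext l
      rw [hshiftinv k (Fin.cons j w') l]
      exact congrFun (congrArg (Gfam k) h1) l
    rw [hVsucc k (Gfam (k + 1) (Fin.cons j w')) (Fin.cons j w'), h1, h2, Fin.cons_zero,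
      Set.image_comp]
    have hXsub : g j '' Vset g (Gfam k w') w' ⊆ uDisk :=
      (Set.image_mono (hVsub k (Gfam k w') (hGamMapsTo k w') w')).trans
        (hgmaps j).image_subset
    exact hphiGam (k + 1) (Fin.cons j w') 0 _ hXsub
  -- the image of each branch lies in U'
  have hbranchU' : ∀ j : Fin d, phi '' (g j '' uDisk) ⊆ U' := by
    intro j
    set S : Set ℂ := phi '' (g j '' uDisk) with hSdef
    have hpi1 : pi (fun _ => j) ∈ closure S := by
      have h0 := (hpidef (fun _ : ℕ => j)).symm.subset (Set.mem_singleton _)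
      have h1 : pi (fun _ : ℕ => j) ∈ closure (phi '' Vset g (Gfam 1 (fun _ : Fin 1 => j))
          (fun _ : Fin 1 => j)) := Set.mem_iInter.1 h0 0
      rwa [hVone (fun _ : Fin 1 => j)] at h1
    have hpiU' : pi (fun _ : ℕ => j) ∈ U' := hKfU' (by rw [hKJ]; exact hpiJ _)
    have hSU' : (U' ∩ S).Nonempty := mem_closure_iff.1 hpi1 U' hU'open hpiU'
    have hSconn : IsPreconnected S := by
      have hcomp : S = (phi ∘ g j) '' uDisk := by rw [hSdef, Set.image_comp]
      rw [hcomp]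
      exact ((convex_ball (0 : ℂ) 1).isPreconnected).image _
        ((hphidiff.continuousOn).comp ((hgdiff j).continuousOn) (hgmaps j))
    have hfrontier : ∀ y ∈ S, y ∈ frontier U' → False := by
      intro y hyS hyf
      have hycl : y ∈ closure U' := frontier_subset_closure hyf
      have hynot : y ∉ U' := by
        rw [hU'open.frontier_eq] at hyf; exact hyf.2
      have hyclUi : ∃ i, y ∈ closure (Ui i) := by
        have hsubcl : closure U' ⊆ ⋃ i, closure (Ui i) := by
          apply closure_minimal
          · rw [hU']; exact Set.iUnion_mono fun i => subset_closure
          · exact isClosed_iUnion_of_finite fun i => isClosed_closure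
        exact Set.mem_iUnion.1 (hsubcl hycl)
      obtain ⟨i, hyi⟩ := hyclUi
      have hyfi : y ∈ frontier (Ui i) := by
        rw [(hUiopen i).frontier_eq]
        exact ⟨hyi, fun h => hynot (hUiU' i h)⟩
      obtain ⟨x0, hx0, hyx⟩ := hyS
      obtain ⟨z2, hz2, rfl⟩ := hx0
      subst hyx
      have hfy : f (phi (g j z2)) = phi z2 := hglift j z2 hz2
      have hphz2 : phi z2 ∈ U \ Jf := hphimaps hz2
      refine hfront i _ hyfi (by rw [hfy]; exact hphz2.1) ?_
      rw [hfy]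
      intro h
      exact hphz2.2 (by rw [← hKJ]; exact h)
    intro y hyS
    by_contra hyU'
    by_cases hycl : y ∈ closure U'
    · exact hfrontier y hyS (by rw [hU'open.frontier_eq]; exact ⟨hycl, hyU'⟩)
    · rcases hSconn U' (closure U')ᶜ hU'open isClosed_closure.isOpen_compl
        (fun q hq => by
          by_cases h1 : q ∈ U'
          · exact Or.inl h1
          · refine Or.inr ?_
            intro hqcl
            exact hfrontier q hq (by rw [hU'open.frontier_eq]; exact ⟨hqcl, h1⟩))
        ⟨hSU'.choose, hSU'.choose_spec.2, hSU'.choose_spec.1⟩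
        ⟨y, hyS, hycl⟩ with ⟨p, hp⟩
      exact hp.2.2 (subset_closure hp.2.1)
  -- branch completeness: fibers over U \ Kf are exactly the branch values
  have hfibereq : ∀ (p : ℂ), p ∈ U → p ∉ Kf → ∀ u ∈ uDisk, phi u = p →
      ∀ x, x ∈ U' → f x = p → ∃ j : Fin d, phi (g j u) = x := by
    intro p hpU hpK u hu hup x hxU' hfx
    choose t ht htc using fun i => hfib p hpU hpK i
    have htmem : ∀ i (y : ℂ), y ∈ t i ↔ (y ∈ Ui i ∧ f y = p) := by
      intro i y
      rw [← Finset.mem_coe, ht i]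
      exact Iff.rfl
    set T : Finset ℂ := Finset.univ.biUnion t with hTdef
    have hTcard : T.card = d := by
      rw [hTdef, Finset.card_biUnion]
      · rw [hdsum]
        exact Finset.sum_congr rfl fun i _ => htc i
      · intro i _ i' _ hne
        rw [Function.onFun, Finset.disjoint_left]
        intro a ha ha'
        exact Set.disjoint_left.1 (hUidisj i i' hne) ((htmem i a).1 ha).1 ((htmem i' a).1 ha').1
    have hTmem : ∀ y : ℂ, y ∈ T ↔ (y ∈ U' ∧ f y = p) := by
      intro y
      constructor
      · intro hy
        obtain ⟨i, _, hyi⟩ := Finset.mem_biUnion.1 hy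
        exact ⟨hUiU' i ((htmem i y).1 hyi).1, ((htmem i y).1 hyi).2⟩
      · rintro ⟨hyU', hfy⟩
        rw [hU'] at hyU'
        obtain ⟨i, hyi⟩ := Set.mem_iUnion.1 hyU'
        exact Finset.mem_biUnion.2 ⟨i, Finset.mem_univ i, (htmem i y).2 ⟨hyi, hfy⟩⟩
    set J : Finset ℂ := Finset.univ.image (fun j : Fin d => phi (g j u)) with hJdef
    have hJinj : Function.Injective (fun j : Fin d => phi (g j u)) := by
      intro a b hab
      by_contra hne
      exact hgdist a b hne u hu hab
    have hJcard : J.card = d := by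
      rw [hJdef, Finset.card_image_of_injective _ hJinj, Finset.card_univ, Fintype.card_fin]
    have hJT : J ⊆ T := by
      intro y hy
      obtain ⟨j', _, rfl⟩ := Finset.mem_image.1 hy
      refine (hTmem _).2 ⟨hbranchU' j' ⟨g j' u, Set.mem_image_of_mem _ hu, rfl⟩, ?_⟩
      rw [hglift j' u hu, hup]
    have hJeq : J = T := Finset.eq_of_subset_of_card_le hJT (by rw [hTcard, hJcard])
    have hxT : x ∈ T := (hTmem x).2 ⟨hxU', hfx⟩
    rw [← hJeq] at hxT
    obtain ⟨j', _, hj'⟩ := Finset.mem_image.1 hxT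
    exact ⟨j', hj'⟩
  -- covering lemma: escaping points near Kf are in the symbolic pieces
  have hcover : ∀ (k : ℕ) (y : ℂ), y ∈ U → y ∉ Kf → (∀ m, m < k → f^[m] y ∈ U') →
      ∃ w' : Fin k → Fin d, y ∈ phi '' Vset g (Gfam k w') w' := by
    intro k
    induction k with
    | zero =>
      intro y hyU hyK _
      refine ⟨fun l => l.elim0, ?_⟩
      rw [hVzero, hphisurj]
      exact ⟨hyU, fun h => hyK (by rw [hKJ]; exact h)⟩
    | succ k ih =>
      intro y hyU hyK hsur
      have hyU' : y ∈ U' := by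
        have := hsur 0 (Nat.succ_pos k)
        simpa using this
      have hfyU : f y ∈ U := by
        have hy2 := hyU'
        rw [hU'] at hy2
        obtain ⟨i, hi⟩ := Set.mem_iUnion.1 hy2
        exact hfmaps i hi
      have hfyK : f y ∉ Kf := fun h => hyK (hKback y hyU' h)
      have hfsur : ∀ m, m < k → f^[m] (f y) ∈ U' := by
        intro m hm
        rw [← Function.iterate_succ_apply]
        exact hsur (m + 1) (Nat.succ_lt_succ hm)
      obtain ⟨w', hw'⟩ := ih (f y) hfyU hfyK hfsur
      obtain ⟨u1, hu1, hphiu1⟩ := hw'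
      have hu1D : u1 ∈ uDisk := hVsub k (Gfam k w') (hGamMapsTo k w') w' hu1
      obtain ⟨j', hj'⟩ := hfibereq (f y) hfyU hfyK u1 hu1D hphiu1 y hyU' rfl
      refine ⟨Fin.cons j' w', ?_⟩
      rw [hVcons k w' j']
      exact ⟨g j' u1, Set.mem_image_of_mem _ hu1, hj'⟩
  -- main argument
  intro z hz
  have hzK : z ∈ Kf := by rw [hKJ]; exact hz
  -- survival sets
  set Nk : ℕ → Set ℂ := fun k => Nat.rec Set.univ (fun _ Np => U' ∩ f ⁻¹' Np) k with hNk
  have hNsucc : ∀ k, Nk (k + 1) = U' ∩ f ⁻¹' (Nk k) := fun k => rfl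
  have hNopen : ∀ k, IsOpen (Nk k) := by
    intro k
    induction k with
    | zero => exact isOpen_univ
    | succ k ih =>
      rw [hNsucc]
      exact hcont.isOpen_inter_preimage hU'open ih
  have hNmem : ∀ k, ∀ y ∈ Nk k, ∀ m, m < k → f^[m] y ∈ U' := by
    intro k
    induction k with
    | zero => intro y _ m hm; omega
    | succ k ih =>
      intro y hy m hm
      rw [hNsucc] at hy
      cases m with
      | zero => simpa using hy.1
      | succ m =>
        rw [Function.iterate_succ_apply]
        exact ih (f y) hy.2 m (by omega)
  have hNKf : ∀ k, ∀ x ∈ Kf, x ∈ Nk k := by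
    intro k
    induction k with
    | zero => intro x _; trivial
    | succ k ih =>
      intro x hx
      rw [hNsucc]
      exact ⟨hKfU' hx, ih (f x) (hKfwd x hx)⟩
  have hzfr : z ∈ closure Kfᶜ := by
    have hzf : z ∈ frontier Kf := by rw [← hJf]; exact hz
    rw [frontier_eq_closure_inter_closure] at hzf
    exact hzf.2
  -- at each level some symbolic piece accumulates at z
  have hzlevel : ∀ k : ℕ, ∃ w' : Fin (k + 1) → Fin d,
      z ∈ closure (phi '' Vset g (Gfam (k + 1) w') w') := by
    intro k
    by_contra hnot
    push_neg at hnot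
    have hO : ∀ w' : Fin (k + 1) → Fin d, ∃ O : Set ℂ, IsOpen O ∧ z ∈ O ∧
        O ∩ (phi '' Vset g (Gfam (k + 1) w') w') = ∅ := by
      intro w'
      have hn := hnot w'
      rw [_root_.mem_closure_iff] at hn
      push_neg at hn
      obtain ⟨O, hO1, hO2, hO3⟩ := hn
      exact ⟨O, hO1, hO2, hO3⟩
    choose O hOopen hzO hOdisj using hO
    have hOall : IsOpen ((⋂ w', O w') ∩ Nk (k + 1)) :=
      (isOpen_iInter_of_finite hOopen).inter (hNopen (k + 1))
    have hzin : z ∈ (⋂ w', O w') ∩ Nk (k + 1) :=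
      ⟨Set.mem_iInter.2 hzO, hNKf (k + 1) z hzK⟩
    obtain ⟨y, hy⟩ := mem_closure_iff.1 hzfr _ hOall hzin
    obtain ⟨⟨hyO, hyN⟩, hyK⟩ := hy
    have hyU' : y ∈ U' := by
      have := hNmem (k + 1) y hyN 0 (Nat.succ_pos k)
      simpa using this
    obtain ⟨w', hw'⟩ := hcover (k + 1) y (hU'U hyU') hyK (hNmem (k + 1) y hyN)
    have hyin : y ∈ O w' ∩ (phi '' Vset g (Gfam (k + 1) w') w') :=
      ⟨Set.mem_iInter.1 hyO w', hw'⟩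
    rw [hOdisj w'] at hyin
    exact hyin
  -- compactness over the sequence space
  set A : ℕ → Set (ℕ → Fin d) := fun k =>
    {eps | z ∈ closure (phi '' Vset g (Gfam (k + 1) (fun l : Fin (k + 1) => eps ↑l))
      (fun l : Fin (k + 1) => eps ↑l))} with hA
  have hAclosed : ∀ k, IsClosed (A k) := by
    intro k
    have hform : A k = (fun eps : ℕ → Fin d => fun l : Fin (k + 1) => eps ↑l) ⁻¹'
        {v : Fin (k + 1) → Fin d | z ∈ closure (phi '' Vset g (Gfam (k + 1) v) v)} := rfl
    rw [hform]
    exact (isClosed_discrete _).preimage (continuous_pi fun l => continuous_apply _)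
  have hAne : ∀ k, (A k).Nonempty := by
    intro k
    obtain ⟨w', hw'⟩ := hzlevel k
    refine ⟨fun n => if h : n < k + 1 then w' ⟨n, h⟩ else w' 0, ?_⟩
    have hww : (fun l : Fin (k + 1) =>
        (fun n => if h : n < k + 1 then w' ⟨n, h⟩ else w' 0) (↑l : ℕ)) = w' := by
      funext l
      show (if h : (l : ℕ) < k + 1 then w' ⟨l, h⟩ else w' 0) = w' l
      rw [dif_pos l.isLt]
    show z ∈ closure (phi '' Vset g
      (Gfam (k + 1) (fun l : Fin (k + 1) =>
        (fun n => if h : n < k + 1 then w' ⟨n, h⟩ else w' 0) (↑l : ℕ)))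
      (fun l : Fin (k + 1) =>
        (fun n => if h : n < k + 1 then w' ⟨n, h⟩ else w' 0) (↑l : ℕ)))
    rw [hww]
    exact hw'
  have hAanti : ∀ k, A (k + 1) ⊆ A k := by
    intro k eps heps
    have hsubV := hnest (k + 1) (Nat.le_add_left 1 k) (fun l : Fin (k + 2) => eps ↑l)
    have hrwf : (fun l : Fin (k + 1) => (fun m : Fin (k + 2) => eps ↑m) l.castSucc)
        = (fun l : Fin (k + 1) => eps ↑l) := by
      funext l
      simp [Fin.coe_castSucc]
    rw [hrwf] at hsubV
    exact closure_mono (Set.image_mono hsubV) heps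
  obtain ⟨eps, heps⟩ := IsCompact.nonempty_iInter_of_sequence_nonempty_isCompact_isClosed
    A hAanti hAne ((hAclosed 0).isCompact) hAclosed
  have hz2 : z ∈ ⋂ k : ℕ, closure (phi '' Vset g (Gfam (k + 1) (fun l : Fin (k + 1) => eps ↑l))
      (fun l : Fin (k + 1) => eps ↑l)) :=
    Set.mem_iInter.2 fun k => Set.mem_iInter.1 heps k
  exact ⟨eps, (Set.mem_singleton_iff.1 ((hpidef eps).subset hz2)).symm⟩
end

section
/- For every z ∈ J_f there exists N ∈ ℕ such that for all n ≥ N, fⁿ(z) is not a critical point of f; i.e., the forward orbit of f^N(z) contains no critical point. -/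
open Set Metric Filter Topology

theorem stmt_18
    (N : ℕ) (hN : 1 ≤ N)
    (U : Set ℂ) (hUopen : IsOpen U) (hUne : U.Nonempty)
    (hUdisk : ∃ h : ℂ → ℂ, DifferentiableOn ℂ h uDisk ∧ Set.BijOn h uDisk U)
    (Ui : Fin N → Set ℂ)
    (hUiopen : ∀ i, IsOpen (Ui i)) (hUine : ∀ i, (Ui i).Nonempty)
    (hUidisk : ∀ i, ∃ h : ℂ → ℂ, DifferentiableOn ℂ h uDisk ∧ Set.BijOn h uDisk (Ui i))
    (hUidisj : ∀ i j, i ≠ j → Disjoint (Ui i) (Ui j))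
    (hUicl : ∀ i, closure (Ui i) ⊆ U)
    (U' : Set ℂ) (hU' : U' = ⋃ i, Ui i)
    (f : ℂ → ℂ)
    (hf : ∃ Ω : Set ℂ, IsOpen Ω ∧ closure U' ⊆ Ω ∧ DifferentiableOn ℂ f Ω)
    (dI : Fin N → ℕ) (hdI : ∀ i, 1 ≤ dI i)
    (hfmaps : ∀ i, Set.MapsTo f (Ui i) U)
    (hfdeg : ∀ i, ∀ w ∈ U, (∑ᶠ z ∈ {z ∈ Ui i | f z = w}, localDeg f z) = dI i)
    (d : ℕ) (hdsum : d = ∑ i, dI i) (hd2 : 2 ≤ d)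
    (Kf Jf : Set ℂ)
    (hKf : Kf = {z ∈ U' | ∀ n : ℕ, f^[n] z ∈ U'})
    (hJf : Jf = frontier Kf)
    (hKJ : Kf = Jf) (hKne : Kf.Nonempty) (hKcomp : IsCompact Kf)
    (hKtd : IsTotallyDisconnected Kf)
    (hKperf : ∀ x ∈ Kf, x ∈ closure (Kf \ {x}))
    (hcritK : ∀ z ∈ U', deriv f z = 0 → z ∈ Kf)
    :
    ∀ z ∈ Jf, ∃ M : ℕ, ∀ n : ℕ, M ≤ n →
      ¬ (f^[n] z ∈ U' ∧ deriv f (f^[n] z) = 0) := by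
  obtain ⟨Ω, hΩo, hΩs, hfΩ⟩ := hf
  have hU'open : IsOpen U' := hU' ▸ isOpen_iUnion fun i => hUiopen i
  have hU'Ω : U' ⊆ Ω := subset_closure.trans hΩs
  -- interior of Kf is empty
  have hintK : interior Kf = ∅ := by
    by_contra h
    obtain ⟨x, hx⟩ := Set.nonempty_iff_ne_empty.2 h
    have hxK : x ∈ Kf := interior_subset hx
    rw [hKJ, hJf] at hxK
    exact hxK.2 hx
  have hnoball : ∀ c ∈ Kf, ∀ ε > (0:ℝ), ¬ (Metric.ball c ε ⊆ Kf) := by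
    intro c hc ε hε hsub
    have : c ∈ interior Kf := mem_interior.mpr ⟨Metric.ball c ε, hsub, isOpen_ball,
      mem_ball_self hε⟩
    simp [hintK] at this
  -- basic invariance facts
  have hKU' : Kf ⊆ U' := by rw [hKf]; exact fun x hx => hx.1
  have hKinv : ∀ x ∈ Kf, f x ∈ Kf := by
    rw [hKf]
    rintro x ⟨hx1, hx2⟩
    refine ⟨by simpa using hx2 1, fun n => ?_⟩
    have h := hx2 (n + 1)
    rwa [Function.iterate_succ_apply] at h
  have hKiter : ∀ x ∈ Kf, ∀ n, f^[n] x ∈ Kf := by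
    intro x hx n
    induction n with
    | zero => simpa using hx
    | succ n ih => rw [Function.iterate_succ_apply']; exact hKinv _ ih
  -- differentiability facts
  have hdiff : ∀ x ∈ Kf, DifferentiableAt ℂ f x := fun x hx =>
    hfΩ.differentiableAt (hΩo.mem_nhds (hU'Ω (hKU' hx)))
  have hdiffIter : ∀ n, ∀ x ∈ Kf, DifferentiableAt ℂ (f^[n]) x := by
    intro n
    induction n with
    | zero => intro x _; simpa [Function.iterate_zero] using differentiableAt_id'
    | succ n ih =>
      intro x hx
      rw [Function.iterate_succ]
      exact (ih (f x) (hKinv x hx)).comp x (hdiff x hx)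
  -- the set of critical points in Kf is finite
  have hfa : AnalyticOnNhd ℂ f Ω := hfΩ.analyticOnNhd hΩo
  have hderiva : AnalyticOnNhd ℂ (deriv f) Ω := hfa.deriv
  set C : Set ℂ := {x ∈ Kf | deriv f x = 0} with hCdef
  have hCfin : C.Finite := by
    by_contra hCinf
    obtain ⟨c, hcK, hacc⟩ := Set.Infinite.exists_accPt_of_subset_isCompact hCinf hKcomp
      (fun x hx => hx.1)
    have hcΩ : c ∈ Ω := hU'Ω (hKU' hcK)
    rcases (hderiva c hcΩ).eventually_eq_zero_or_eventually_ne_zero with h0 | hne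
    · -- f is constant near c, so a ball lies in Kf : contradiction
      have hev : ∀ᶠ w in 𝓝 c, w ∈ Ω ∧ w ∈ U' ∧ deriv f w = 0 :=
        (hΩo.eventually_mem hcΩ).and ((hU'open.eventually_mem (hKU' hcK)).and h0)
      obtain ⟨ε, hε, hball⟩ := Metric.eventually_nhds_iff_ball.mp hev
      have hdiffb : DifferentiableOn ℂ f (Metric.ball c ε) :=
        hfΩ.mono (fun w hw => (hball w hw).1)
      have hfd0 : ∀ x ∈ Metric.ball c ε, fderivWithin ℂ f (Metric.ball c ε) x = 0 := by
        intro x hx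
        rw [fderivWithin_of_isOpen isOpen_ball hx]
        have hdx : DifferentiableAt ℂ f x :=
          hfΩ.differentiableAt (hΩo.mem_nhds (hball x hx).1)
        have h1 : HasDerivAt f 0 x := by
          have := hdx.hasDerivAt
          rwa [(hball x hx).2.2] at this
        have h2 := h1.hasFDerivAt.fderiv
        rw [h2]
        ext v
        simp
      have hconst : ∀ w ∈ Metric.ball c ε, f w = f c := fun w hw =>
        (convex_ball c ε).is_const_of_fderivWithin_eq_zero hdiffb hfd0 hw
          (mem_ball_self hε)
      refine hnoball c hcK ε hε ?_
      intro w hw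
      rw [hKf]
      have hfc : f c ∈ Kf := hKinv c hcK
      refine ⟨(hball w hw).2.1, fun n => ?_⟩
      cases n with
      | zero => simpa using (hball w hw).2.1
      | succ n =>
        rw [Function.iterate_succ_apply, hconst w hw]
        exact hKU' (hKiter _ hfc n)
    · -- contradicts accumulation of critical points at c
      rw [accPt_iff_frequently] at hacc
      have : ∃ᶠ y in 𝓝[≠] c, deriv f y = 0 := by
        rw [frequently_nhdsWithin_iff]
        exact hacc.mono (fun y hy => ⟨hy.2.2, hy.1⟩)
      exact this.and_eventually hne |>.exists.elim (fun y hy => hy.2 hy.1)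
  -- no critical periodic point
  have hC : ∀ c ∈ Kf, deriv f c = 0 → ∀ p : ℕ, 0 < p → f^[p] c ≠ c := by
    intro c hc hdc p hp hfix
    obtain ⟨m, rfl⟩ := Nat.exists_eq_succ_of_ne_zero hp.ne'
    have h1 : HasDerivAt f 0 c := by
      have := (hdiff c hc).hasDerivAt
      rwa [hdc] at this
    have h2 : HasDerivAt (f^[m]) (deriv (f^[m]) (f c)) (f c) :=
      (hdiffIter m (f c) (hKinv c hc)).hasDerivAt
    have h3 : HasDerivAt (f^[m + 1]) 0 c := by
      have := h2.comp c h1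
      rw [mul_zero] at this
      rw [Function.iterate_succ]
      exact this
    have hlo : (fun w => f^[m + 1] w - c) =o[𝓝 c] fun w => w - c := by
      have := hasDerivAt_iff_isLittleO.mp h3
      simpa [hfix] using this
    have hev1 : ∀ᶠ w in 𝓝 c, ‖f^[m + 1] w - c‖ ≤ 1 / 2 * ‖w - c‖ :=
      hlo.def (by norm_num)
    have hev2 : ∀ᶠ w in 𝓝 c, ∀ j ∈ Set.Iio (m + 1), f^[j] w ∈ U' := by
      rw [eventually_all_finite (Set.finite_Iio (m + 1))]
      intro j _
      exact (hdiffIter j c hc).continuousAt.preimage_mem_nhds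
        (hU'open.mem_nhds (hKU' (hKiter c hc j)))
    obtain ⟨ε, hε, hball⟩ := Metric.eventually_nhds_iff_ball.mp (hev1.and hev2)
    have hginv : ∀ k, ∀ w ∈ Metric.ball c ε, (f^[m + 1])^[k] w ∈ Metric.ball c ε := by
      intro k
      induction k with
      | zero => intro w hw; simpa using hw
      | succ k ih =>
        intro w hw
        have h2 := ih w hw
        have h3 := (hball _ h2).1
        rw [Function.iterate_succ_apply']
        rw [mem_ball_iff_norm] at h2 ⊢
        have := norm_nonneg ((f^[m + 1])^[k] w - c)
        linarith
    refine hnoball c hc ε hε ?_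
    intro w hw
    rw [hKf]
    have hall : ∀ n, f^[n] w ∈ U' := by
      intro n
      have hn : n % (m + 1) ∈ Set.Iio (m + 1) := Nat.mod_lt _ (Nat.succ_pos m)
      have heq : f^[n] w = f^[n % (m + 1)] ((f^[m + 1])^[n / (m + 1)] w) := by
        conv_lhs => rw [← Nat.mod_add_div n (m + 1)]
        rw [Function.iterate_add_apply, Function.iterate_mul]
      rw [heq]
      exact (hball _ (hginv _ w hw)).2 _ hn
    refine ⟨by simpa using hall 0, hall⟩
  -- conclusion
  intro z hz
  have hzK : z ∈ Kf := by rw [hKJ]; exact hz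
  by_contra hcon
  push_neg at hcon
  have hSinf : {n : ℕ | f^[n] z ∈ U' ∧ deriv f (f^[n] z) = 0}.Infinite := by
    rw [← Nat.frequently_atTop_iff_infinite, Filter.frequently_atTop]
    intro M
    obtain ⟨n, hn, hcrit⟩ := hcon M
    exact ⟨n, hn, hcrit⟩
  have hmaps : Set.MapsTo (fun n => f^[n] z)
      {n : ℕ | f^[n] z ∈ U' ∧ deriv f (f^[n] z) = 0} C := by
    intro n hn
    exact ⟨hKiter z hzK n, hn.2⟩
  obtain ⟨n₁, hn₁, n₂, hn₂, hne, heq⟩ := hSinf.exists_ne_map_eq_of_mapsTo hmaps hCfin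
  rcases hne.lt_or_gt with hlt | hlt
  · refine hC (f^[n₁] z) (hKiter z hzK n₁) hn₁.2 (n₂ - n₁) (Nat.sub_pos_of_lt hlt) ?_
    rw [← Function.iterate_add_apply, Nat.sub_add_cancel hlt.le]
    exact heq.symm
  · refine hC (f^[n₂] z) (hKiter z hzK n₂) hn₂.2 (n₁ - n₂) (Nat.sub_pos_of_lt hlt) ?_
    rw [← Function.iterate_add_apply, Nat.sub_add_cancel hlt.le]
    exact heq
end
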